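/- Let (X,d) be a complete metric space and T,S : X → X mappings such that T is continuous, injective, and sequentially convergent. If there exists λ ∈ [0, 1/2) such that d(T(S x), T(S y)) ≤ λ·(d(T x, T(S x)) + d(T y, T(S y))) for all x, y ∈ X, then for every x₀ ∈ X the sequence of iterates {Sⁿ x₀} converges to the unique fixed point of S. -/

import Mathlib

open Filter Topology

theorem extended_kannan_iterates_converge
    {X : Type*} [MetricSpace X] [CompleteSpace X] [Nonempty X]
    (T S : X → X)
    (hTc : Continuous T) (hTi : Function.Injective T)
    (hTseq : ∀ y : ℕ → X, (∃ L : X, Tendsto (fun n => T (y n)) atTop (𝓝 L)) →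
      ∃ z : X, Tendsto y atTop (𝓝 z))
    (lam : ℝ) (hlam0 : 0 ≤ lam) (hlam : lam < 1/2)
    (h : ∀ x y : X, dist (T (S x)) (T (S y)) ≤
      lam * (dist (T x) (T (S x)) + dist (T y) (T (S y)))) :
    ∃ u : X, (∀ v : X, S v = v ↔ v = u) ∧
      ∀ x₀ : X, Tendsto (fun n => S^[n] x₀) atTop (𝓝 u) := by
  have h1lam : (0:ℝ) < 1 - lam := by linarith
  -- uniqueness of fixed points
  have uniq : ∀ v w : X, S v = v → S w = w → v = w := by
    intro v w hv hw
    have hvw := h v w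
    rw [hv, hw] at hvw
    simp [dist_self] at hvw
    exact hTi hvw
  -- main convergence result
  have main : ∀ x₀ : X, ∃ z : X, S z = z ∧
      Tendsto (fun n => S^[n] x₀) atTop (𝓝 z) := by
    intro x₀
    set a : ℕ → X := fun n => S^[n] x₀ with ha
    set b : ℕ → X := fun n => T (a n) with hb
    have hstep : ∀ n, S (a n) = a (n+1) := by
      intro n
      simp [ha, Function.iterate_succ_apply']
    set r : ℝ := lam / (1 - lam) with hr
    have hr0 : 0 ≤ r := div_nonneg hlam0 (le_of_lt h1lam)
    have hr1 : r < 1 := (div_lt_one h1lam).mpr (by linarith)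
    have key : ∀ n, dist (b (n+1)) (b (n+2)) ≤ r * dist (b n) (b (n+1)) := by
      intro n
      have hn := h (a n) (a (n+1))
      rw [hstep n, hstep (n+1)] at hn
      have hnn : dist (b (n+1)) (b (n+2)) ≤
          lam * (dist (b n) (b (n+1)) + dist (b (n+1)) (b (n+2))) := hn
      rw [hr, div_mul_eq_mul_div, le_div_iff₀ h1lam]
      nlinarith
    have geo : ∀ n, dist (b n) (b (n+1)) ≤ dist (b 0) (b 1) * r ^ n := by
      intro n
      induction n with
      | zero => simp
      | succ k ih =>
        calc dist (b (k+1)) (b (k+2)) ≤ r * dist (b k) (b (k+1)) := key k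
          _ ≤ r * (dist (b 0) (b 1) * r ^ k) := by
              exact mul_le_mul_of_nonneg_left ih hr0
          _ = dist (b 0) (b 1) * r ^ (k+1) := by ring
    have hcauchy : CauchySeq b := cauchySeq_of_le_geometric r (dist (b 0) (b 1)) hr1 geo
    obtain ⟨L, hL⟩ := cauchySeq_tendsto_of_complete hcauchy
    obtain ⟨z, hz⟩ := hTseq a ⟨L, hL⟩
    have hTz : Tendsto (fun n => b n) atTop (𝓝 (T z)) := (hTc.tendsto z).comp hz
    have hTz1 : Tendsto (fun n => b (n+1)) atTop (𝓝 (T z)) :=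
      hTz.comp (tendsto_add_atTop_nat 1)
    have dtt : Tendsto (fun n => dist (b n) (b (n+1))) atTop (𝓝 0) := by
      simpa using hTz.dist hTz1
    have hfix : S z = z := by
      have hd : ∀ n, dist (b (n+1)) (T (S z)) ≤
          lam * (dist (b n) (b (n+1)) + dist (T z) (T (S z))) := by
        intro n
        have hn := h (a n) z
        rw [hstep n] at hn
        exact hn
      have l1 : Tendsto (fun n => dist (b (n+1)) (T (S z))) atTop
          (𝓝 (dist (T z) (T (S z)))) := hTz1.dist tendsto_const_nhds
      have l2 : Tendsto (fun n => lam * (dist (b n) (b (n+1)) + dist (T z) (T (S z))))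
          atTop (𝓝 (lam * (0 + dist (T z) (T (S z))))) :=
        tendsto_const_nhds.mul (dtt.add tendsto_const_nhds)
      have hle := le_of_tendsto_of_tendsto' l1 l2 hd
      have hd0 : dist (T z) (T (S z)) = 0 := by
        have := dist_nonneg (x := T z) (y := T (S z))
        nlinarith
      exact hTi (dist_eq_zero.mp hd0).symm
    exact ⟨z, hfix, hz⟩
  obtain ⟨u, hu, _⟩ := main (Classical.arbitrary X)
  refine ⟨u, ?_, ?_⟩
  · intro v
    constructor
    · intro hv; exact uniq v u hv hu
    · rintro rfl; exact hu
  · intro x₀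
    obtain ⟨z, hz, hconv⟩ := main x₀
    rwa [uniq z u hz hu] at hconv
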